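/- Let Γ and X be finite groups, R a commutative integral domain in which no prime divisor of |Γ|·|X| is invertible, m ∈ R, and suppose 1 + m|X| is neither zero nor a unit in R. Let c = (1,1) + m·Σ_{x∈X}(1,x) ∈ R[Γ×X]. Then the ring R[Γ×X]_c, with multiplication a ·_c b = acb, has no nonzero idempotents. -/

import Mathlib

noncomputable section

open LinearMap

/-! ### Coefficient map -/

variable {R : Type*} [CommRing R] {K : Type*} [CommRing K] [Algebra R K]
  {G : Type*} [Group G]

/-- Coefficient-wise map of monoid algebras. -/
noncomputable def coeffMap (R K G : Type*) [CommRing R] [CommRing K] [Algebra R K] [Group G] :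
    MonoidAlgebra R G →+* MonoidAlgebra K G :=
  MonoidAlgebra.liftNCRingHom
    ((MonoidAlgebra.singleOneRingHom : K →+* MonoidAlgebra K G).comp (algebraMap R K))
    (MonoidAlgebra.of K G)
    (fun r g => by
      show Commute (MonoidAlgebra.single 1 _) _
      exact MonoidAlgebra.single_commute Commute.one_left (Commute.all _) _)

lemma coeffMap_single (g : G) (r : R) :
    coeffMap R K G (MonoidAlgebra.single g r) = MonoidAlgebra.single g (algebraMap R K r) := by
  show MonoidAlgebra.liftNC _ _ _ = _
  rw [MonoidAlgebra.liftNC_single]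
  show MonoidAlgebra.single 1 _ * MonoidAlgebra.single g 1 = _
  rw [MonoidAlgebra.single_mul_single, one_mul, mul_one]

lemma coeffMap_eq_mapRange (x : MonoidAlgebra R G) :
    (coeffMap R K G x).coeff = Finsupp.mapRange (algebraMap R K) (map_zero _) x.coeff := by
  induction x using MonoidAlgebra.induction_linear with
  | zero => simp
  | add f g hf hg =>
    rw [map_add, MonoidAlgebra.coeff_add, hf, hg, MonoidAlgebra.coeff_add,
      Finsupp.mapRange_add (map_add _)]
  | single a b =>
    rw [coeffMap_single]
    exact (Finsupp.mapRange_single).symm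

lemma coeffMap_apply (x : MonoidAlgebra R G) (g : G) :
    (coeffMap R K G x).coeff g = algebraMap R K (x.coeff g) := by
  rw [coeffMap_eq_mapRange]
  exact Finsupp.mapRange_apply

lemma coeffMap_injective (hinj : Function.Injective (algebraMap R K)) :
    Function.Injective (coeffMap R K G) := by
  intro x y h
  ext g
  apply hinj
  rw [← coeffMap_apply, ← coeffMap_apply, h]

/-! ### Trace argument over a field -/

variable {L : Type*} [Field L] {G : Type*}

section FieldCase
variable {K : Type*} [Field K] {G : Type*} [Group G] [Fintype G]

lemma trace_mulLeft (e : MonoidAlgebra K G) :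
    LinearMap.trace K _ (LinearMap.mulLeft K e) = (Fintype.card G : K) * e.coeff 1 := by
  classical
  let b : Module.Basis G K (MonoidAlgebra K G) := MonoidAlgebra.basis G K
  rw [LinearMap.trace_eq_matrix_trace K b, Matrix.trace]
  have hdiag : ∀ g : G, (LinearMap.toMatrix b b (LinearMap.mulLeft K e)) g g = e.coeff 1 := by
    intro g
    rw [LinearMap.toMatrix_apply]
    have hb : b g = MonoidAlgebra.of K G g := by
      rw [MonoidAlgebra.of_apply]; rfl
    have hrepr : ∀ x : MonoidAlgebra K G, b.repr x = x.coeff := fun x => rfl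
    rw [hb, hrepr]
    show (e * (MonoidAlgebra.of K G) g).coeff g = e.coeff 1
    rw [MonoidAlgebra.of_apply, MonoidAlgebra.coeff_mul_single_apply]
    simp
  simp only [Matrix.diag_apply, hdiag, Finset.sum_const, Finset.card_univ, nsmul_eq_mul]

lemma trace_mulLeft_rank (e : MonoidAlgebra K G) (he : e * e = e) (h0 : e ≠ 0) :
    ∃ r : ℕ, 0 < r ∧ LinearMap.trace K _ (LinearMap.mulLeft K e) = r := by
  haveI : Module.Finite K (MonoidAlgebra K G) :=
    Module.Finite.of_basis (MonoidAlgebra.basis G K : Module.Basis G K (MonoidAlgebra K G))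
  have hcomp : (LinearMap.mulLeft K e) ∘ₗ (LinearMap.mulLeft K e) = LinearMap.mulLeft K e := by
    ext x
    simp only [LinearMap.comp_apply, LinearMap.mulLeft_apply, ← mul_assoc, he]
  obtain ⟨p, hp⟩ := (LinearMap.isProj_iff_isIdempotentElem _).mpr hcomp
  refine ⟨Module.finrank K p, ?_, hp.trace⟩
  rcases Nat.eq_zero_or_pos (Module.finrank K p) with h | h
  · exfalso
    have hbot : p = ⊥ := Submodule.finrank_eq_zero.mp h
    apply h0
    have h1 : e * 1 ∈ p := hp.map_mem 1
    rw [hbot, Submodule.mem_bot] at h1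
    simpa using h1
  · exact h

/-- Trace argument over a `CharZero` field. -/
lemma coleman_charZero_field (e : MonoidAlgebra K G) (he : e * e = e)
    (h0 : e ≠ 0) (h1 : e ≠ 1) [CharZero K] :
    ∃ r : ℕ, 0 < r ∧ r < Fintype.card G ∧ (Fintype.card G : K) * e.coeff 1 = r := by
  obtain ⟨r, hr, htr⟩ := trace_mulLeft_rank e he h0
  have he' : (1 - e) * (1 - e) = 1 - e := by
    rw [sub_mul, one_mul, mul_sub, mul_one, he, sub_self, sub_zero]
  have h0' : (1 : MonoidAlgebra K G) - e ≠ 0 := fun h => h1 (sub_eq_zero.mp h).symm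
  obtain ⟨r', hr', htr'⟩ := trace_mulLeft_rank (1 - e) he' h0'
  have hadd : (r : K) + (r' : K) = (Fintype.card G : K) := by
    rw [← htr, ← htr']
    have : LinearMap.mulLeft K e + LinearMap.mulLeft K (1 - e) =
        LinearMap.mulLeft K (1 : MonoidAlgebra K G) := by
      ext x; simp [add_mul, sub_mul]
    rw [← map_add, this, LinearMap.mulLeft_one]
    haveI : Module.Finite K (MonoidAlgebra K G) :=
      Module.Finite.of_basis (MonoidAlgebra.basis G K : Module.Basis G K (MonoidAlgebra K G))
    rw [LinearMap.trace_id]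
    have hfr : Module.finrank K (MonoidAlgebra K G) = Fintype.card G :=
      Module.finrank_eq_card_basis (MonoidAlgebra.basis G K : Module.Basis G K (MonoidAlgebra K G))
    rw [hfr]
  have hnat : r + r' = Fintype.card G := by exact_mod_cast hadd
  refine ⟨r, hr, by omega, ?_⟩
  rw [← trace_mulLeft e, htr]

end FieldCase

/-! ### Arithmetic core -/

lemma arith_core {R : Type*} [CommRing R] [IsDomain R] [CharZero R]
    (n r : ℕ) (hn : 0 < n) (hr : 0 < r) (hrn : r < n) (e1 : R)
    (heq : (n : R) * e1 = (r : R))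
    (h : ∀ q : ℕ, q.Prime → q ∣ n → ¬ IsUnit (q : R)) : False := by
  have hnr : ¬ n ∣ r := Nat.not_dvd_of_pos_of_lt hr hrn
  rw [← Nat.factorization_le_iff_dvd hn.ne' hr.ne'] at hnr
  rw [Finsupp.le_def] at hnr
  push_neg at hnr
  obtain ⟨p, hplt⟩ := hnr
  have hp : p.Prime := by
    by_contra hnp
    rw [Nat.factorization_eq_zero_of_not_prime n hnp] at hplt
    omega
  have hpn : p ∣ n := Nat.dvd_of_factorization_pos (by omega)
  set j := r.factorization p with hj
  set s := r / p ^ j with hs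
  have hrs : p ^ j * s = r := Nat.ordProj_mul_ordCompl_eq_self r p
  have hps : ¬ p ∣ s := Nat.not_dvd_ordCompl hp hr.ne'
  have hdvd : p ^ (j + 1) ∣ n := (Nat.Prime.pow_dvd_iff_le_factorization hp hn.ne').mpr hplt
  set t := n / p ^ (j + 1) with ht
  have hnt : p ^ (j + 1) * t = n := Nat.mul_div_cancel' hdvd
  have key : (p : R) ^ j * ((p : R) * ((t : R) * e1) - (s : R)) = 0 := by
    have := heq
    rw [← hnt, ← hrs] at this
    push_cast at this
    ring_nf
    ring_nf at this
    linear_combination this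
  have hpj : ((p : R) ^ j) ≠ 0 := by
    exact_mod_cast pow_ne_zero j (Nat.cast_ne_zero.mpr hp.pos.ne' : (p : R) ≠ 0)
  have key2 : (p : R) * ((t : R) * e1) = (s : R) := by
    rcases mul_eq_zero.mp key with h' | h'
    · exact absurd h' hpj
    · exact sub_eq_zero.mp h'
  have hcop : IsCoprime (p : ℤ) (s : ℤ) :=
    Nat.isCoprime_iff_coprime.mpr ((Nat.Prime.coprime_iff_not_dvd hp).mpr hps)
  obtain ⟨u, v, huv⟩ := hcop
  apply h p hp hpn
  apply isUnit_of_mul_isUnit_left (y := ((u : R) + (v : R) * ((t : R) * e1)))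
  rw [show (p : R) * ((u : R) + (v : R) * ((t : R) * e1))
      = (u : R) * (p : R) + (v : R) * ((p : R) * ((t : R) * e1)) by ring, key2]
  have : ((u * p + v * s : ℤ) : R) = 1 := by rw [huv]; exact Int.cast_one
  push_cast at this
  rw [this]
  exact isUnit_one

/-! ### Coleman, characteristic zero case -/

lemma coleman_charZero {G : Type*} [Group G] [Fintype G]
    {R : Type*} [CommRing R] [IsDomain R] [CharZero R]
    (h : ∀ q : ℕ, q.Prime → q ∣ Fintype.card G → ¬ IsUnit (q : R))
    (e : MonoidAlgebra R G) (he : e * e = e) : e = 0 ∨ e = 1 := by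
  by_contra hcon
  push_neg at hcon
  obtain ⟨h0, h1⟩ := hcon
  set K := FractionRing R
  haveI : CharZero K := charZero_of_injective_algebraMap
    (IsFractionRing.injective R K : Function.Injective (algebraMap R K))
  set ι := coeffMap R K G with hι
  have hinj : Function.Injective ι := coeffMap_injective (IsFractionRing.injective R K)
  have he' : ι e * ι e = ι e := by rw [← map_mul, he]
  have h0' : ι e ≠ 0 := fun h => h0 (hinj (by rw [h, map_zero]))
  have h1' : ι e ≠ 1 := fun h => h1 (hinj (by rw [h, map_one]))
  obtain ⟨r, hr, hrn, heq⟩ := coleman_charZero_field (ι e) he' h0' h1'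
  have heqR : (Fintype.card G : R) * e.coeff 1 = (r : R) := by
    apply IsFractionRing.injective R K
    rw [map_mul, map_natCast, map_natCast, ← coeffMap_apply]
    exact heq
  exact arith_core (Fintype.card G) r Fintype.card_pos hr hrn (e.coeff 1) heqR h




open Finsupp

variable {R : Type*} [CommRing R] {G : Type*} [Group G] [Fintype G]

lemma ker_nilpotent (p : ℕ) (hp : Fact p.Prime) [CharP R p]
    (z : G) (hz : z ∈ Subgroup.center G) (hord : orderOf z = p)
    (x : MonoidAlgebra R G)
    (hx : MonoidAlgebra.mapDomain (QuotientGroup.mk (s := Subgroup.zpowers z)) x = 0) :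
    x ^ p = 0 := by
  classical
  set H := Subgroup.zpowers z with hH
  set σ : G → G := fun g => (QuotientGroup.mk g : G ⧸ H).out with hσ
  have hsec : ∀ g : G, ∃ n : ℕ, g = σ g * z ^ n := by
    intro g
    have h1 : (QuotientGroup.mk (σ g) : G ⧸ H) = QuotientGroup.mk g := Quotient.out_eq _
    have h2 : (σ g)⁻¹ * g ∈ H := (QuotientGroup.eq (s := H)).mp h1
    have h3 : (σ g)⁻¹ * g ∈ Submonoid.powers z := mem_powers_iff_mem_zpowers.mpr h2
    obtain ⟨n, hn⟩ := h3
    have hn' : z ^ n = (σ g)⁻¹ * g := hn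
    exact ⟨n, by rw [hn']; group⟩
  set N : G → ℕ := fun g => (hsec g).choose with hN
  have hNg : ∀ g, g = σ g * z ^ N g := fun g => (hsec g).choose_spec
  set zz : MonoidAlgebra R G := MonoidAlgebra.single z 1 with hzz
  set y : MonoidAlgebra R G := ∑ g ∈ x.coeff.support, x.coeff g •
    (∑ j ∈ Finset.range (N g), MonoidAlgebra.single (σ g * z ^ j) (1 : R)) with hy
  have key : y * (zz - 1) = x := by
    rw [hy, Finset.sum_mul]
    have hterm : ∀ g ∈ x.coeff.support,
        (x.coeff g • (∑ j ∈ Finset.range (N g), MonoidAlgebra.single (σ g * z ^ j) (1 : R))) * (zz - 1)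
        = x.coeff g • (MonoidAlgebra.single g (1 : R) - MonoidAlgebra.single (σ g) (1 : R)) := by
      intro g _
      rw [smul_mul_assoc]
      congr 1
      rw [Finset.sum_mul]
      have : ∀ j ∈ Finset.range (N g),
          (MonoidAlgebra.single (σ g * z ^ j) (1 : R)) * (zz - 1)
          = MonoidAlgebra.single (σ g * z ^ (j + 1)) (1 : R)
            - MonoidAlgebra.single (σ g * z ^ j) (1 : R) := by
        intro j _
        rw [mul_sub, mul_one, hzz, MonoidAlgebra.single_mul_single, mul_one, mul_assoc, ← pow_succ]
      rw [Finset.sum_congr rfl this, Finset.sum_range_sub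
        (fun j => MonoidAlgebra.single (σ g * z ^ j) (1 : R))]
      rw [pow_zero, mul_one, ← hNg g]
    rw [Finset.sum_congr rfl hterm]
    have hsplit : ∑ g ∈ x.coeff.support, x.coeff g •
        (MonoidAlgebra.single g (1 : R) - MonoidAlgebra.single (σ g) (1 : R))
        = (∑ g ∈ x.coeff.support, x.coeff g • MonoidAlgebra.single g (1 : R))
          - ∑ g ∈ x.coeff.support, x.coeff g • MonoidAlgebra.single (σ g) (1 : R) := by
      rw [← Finset.sum_sub_distrib]
      exact Finset.sum_congr rfl fun g _ => smul_sub _ _ _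
    rw [hsplit]
    have h1 : (∑ g ∈ x.coeff.support, x.coeff g • MonoidAlgebra.single g (1 : R)) = x := by
      have : ∀ g ∈ x.coeff.support, x.coeff g • MonoidAlgebra.single g (1 : R)
          = MonoidAlgebra.ofCoeff (Finsupp.single g (x.coeff g)) := by
        intro g _
        rw [MonoidAlgebra.smul_single', mul_one]; rfl
      rw [Finset.sum_congr rfl this, ← MonoidAlgebra.ofCoeff_sum]
      exact congrArg MonoidAlgebra.ofCoeff (Finsupp.sum_single x.coeff)
    have h2 : (∑ g ∈ x.coeff.support, x.coeff g • MonoidAlgebra.single (σ g) (1 : R))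
        = MonoidAlgebra.mapDomain σ x := by
      show _ = MonoidAlgebra.ofCoeff (Finsupp.mapDomain σ x.coeff)
      rw [Finsupp.mapDomain, MonoidAlgebra.ofCoeff_finsuppSum, Finsupp.sum]
      exact Finset.sum_congr rfl fun g _ => by
        rw [MonoidAlgebra.ofCoeff_single, MonoidAlgebra.smul_single', mul_one]
    have h3 : MonoidAlgebra.mapDomain σ x = 0 := by
      have : σ = Quotient.out ∘ (QuotientGroup.mk (s := H)) := rfl
      have hx' : Finsupp.mapDomain (QuotientGroup.mk (s := H)) x.coeff = 0 :=
        congrArg MonoidAlgebra.coeff hx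
      apply MonoidAlgebra.coeff_injective
      show Finsupp.mapDomain σ x.coeff = 0
      rw [this, Finsupp.mapDomain_comp, hx', Finsupp.mapDomain_zero]
    rw [h1, h2, h3, sub_zero]
  have hzzc : Commute zz y := MonoidAlgebra.single_commute
    (fun a' => ((Subgroup.mem_center_iff.mp hz a')).symm) (fun b' => Commute.one_left b') y
  have hcomm : Commute y (zz - 1) := (hzzc.symm).sub_right (Commute.one_right y)
  haveI : CharP (MonoidAlgebra R G) p := by
    apply charP_of_injective_ringHom
      (f := (MonoidAlgebra.singleOneRingHom : R →+* MonoidAlgebra R G)) ?_ p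
    intro a b hab
    have : (MonoidAlgebra.single (1:G) a : MonoidAlgebra R G) = MonoidAlgebra.single 1 b := hab
    exact Finsupp.single_injective (1 : G) (congrArg MonoidAlgebra.coeff this)
  have hzp : (zz - 1) ^ p = 0 := by
    rw [sub_pow_char_of_commute p (Commute.one_right zz), one_pow, hzz,
      MonoidAlgebra.single_pow, one_pow]
    have : z ^ p = 1 := by rw [← hord]; exact pow_orderOf_eq_one z
    rw [this, ← MonoidAlgebra.one_def, sub_self]
  rw [← key, hcomm.mul_pow, hzp, mul_zero]

open Finsupp

section
variable {R : Type*} [CommRing R] [IsDomain R]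

lemma coleman_trivial {G : Type*} [Group G] [Fintype G] (hG : Fintype.card G = 1)
    (e : MonoidAlgebra R G) (he : e * e = e) : e = 0 ∨ e = 1 := by
  haveI : Subsingleton G := Fintype.card_le_one_iff_subsingleton.mp hG.le
  have hrep : e = MonoidAlgebra.single 1 (e.coeff 1) := by
    ext g
    rw [Subsingleton.elim g 1]
    rw [MonoidAlgebra.coeff_single, Finsupp.single_eq_same]
  rw [hrep, MonoidAlgebra.single_mul_single, one_mul] at he
  have hval : e.coeff 1 * e.coeff 1 = e.coeff 1 :=
    Finsupp.single_injective (1 : G) (congrArg MonoidAlgebra.coeff he)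
  have : e.coeff 1 * (e.coeff 1 - 1) = 0 := by ring_nf; linear_combination hval
  rcases mul_eq_zero.mp this with h | h
  · left; rw [hrep, h]; exact MonoidAlgebra.single_zero 1
  · right; rw [hrep, sub_eq_zero.mp h, ← MonoidAlgebra.one_def]

lemma coleman_charP_aux (p : ℕ) (hp : p.Prime) [CharP R p] :
    ∀ n : ℕ, ∀ (G : Type*) (_ : Group G) (_ : Fintype G), Fintype.card G = n →
    (∀ q : ℕ, q.Prime → q ∣ Fintype.card G → ¬ IsUnit (q : R)) →
    ∀ e : MonoidAlgebra R G, e * e = e → e = 0 ∨ e = 1 := by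
  intro n
  induction n using Nat.strong_induction_on with
  | _ n ih =>
    intro G _ _ hcard h e he
    classical
    haveI : Fact p.Prime := ⟨hp⟩
    -- every prime divisor of |G| is p
    have hq : ∀ q : ℕ, q.Prime → q ∣ Fintype.card G → q = p := by
      intro q hq hqd
      by_contra hne
      apply h q hq hqd
      have hz : (q : ZMod p) ≠ 0 := by
        rw [Ne, ZMod.natCast_eq_zero_iff]
        intro hdvd
        exact hne ((Nat.prime_dvd_prime_iff_eq hp hq).mp hdvd).symm
      have hu : IsUnit (q : ZMod p) := isUnit_iff_ne_zero.mpr hz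
      have := hu.map (ZMod.castHom (dvd_refl p) R)
      rwa [map_natCast] at this
    by_cases h1 : Fintype.card G = 1
    · exact coleman_trivial h1 e he
    · -- |G| is a positive power of p
      have hcard0 : Fintype.card G ≠ 0 := Fintype.card_ne_zero
      have hcompl : (Fintype.card G) / p ^ ((Fintype.card G).factorization p) = 1 := by
        by_contra hc
        obtain ⟨q, hqp, hqd⟩ := Nat.exists_prime_and_dvd hc
        have : q ∣ Fintype.card G := hqd.trans (Nat.ordCompl_dvd _ p)
        have hqeq : q = p := hq q hqp this
        exact Nat.not_dvd_ordCompl hp hcard0 (hqeq ▸ hqd)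
      have hpow : Fintype.card G = p ^ ((Fintype.card G).factorization p) := by
        have := Nat.ordProj_mul_ordCompl_eq_self (Fintype.card G) p
        rw [hcompl, mul_one] at this
        exact this.symm
      have hP : IsPGroup p G := IsPGroup.of_card (by rw [Nat.card_eq_fintype_card]; exact hpow)
      haveI : Nontrivial G := Fintype.one_lt_card_iff_nontrivial.mp
        (by have := Fintype.card_pos (α := G); omega)
      haveI : Nontrivial (Subgroup.center G) := hP.center_nontrivial
      -- central element of order p
      have hpc : p ∣ Fintype.card (Subgroup.center G) := by
        obtain ⟨k, hk⟩ := (IsPGroup.iff_card.mp (hP.to_subgroup (Subgroup.center G)))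
        rw [Nat.card_eq_fintype_card] at hk
        have hk1 : k ≠ 0 := by
          intro h0
          rw [h0, pow_zero] at hk
          exact (Fintype.one_lt_card).ne' hk
        rw [hk]
        exact dvd_pow_self p hk1
      obtain ⟨ζ, hζ⟩ := exists_prime_orderOf_dvd_card p hpc
      set z := (ζ : G) with hzdef
      have hordz : orderOf z = p := by rw [Subgroup.orderOf_coe]; exact hζ
      have hzc : z ∈ Subgroup.center G := ζ.2
      set H := Subgroup.zpowers z with hH
      haveI hnorm : H.Normal := by
        constructor
        intro a ha g
        have hac : a ∈ Subgroup.center G := by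
          obtain ⟨k, hk⟩ := ha
          rw [← hk]
          exact Subgroup.zpow_mem _ hzc k
        have : g * a * g⁻¹ = a := by
          rw [Subgroup.mem_center_iff.mp hac g, mul_assoc, mul_inv_cancel, mul_one]
        rwa [this]
      haveI : Fintype (G ⧸ H) := Fintype.ofFinite _
      have hcardH : Nat.card H = p := by rw [Nat.card_zpowers, hordz]
      have hcardQ : Fintype.card G = Fintype.card (G ⧸ H) * p := by
        have := Subgroup.card_eq_card_quotient_mul_card_subgroup H
        rw [hcardH, Nat.card_eq_fintype_card, Nat.card_eq_fintype_card] at this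
        exact this
      have hlt : Fintype.card (G ⧸ H) < n := by
        have h2 : 2 ≤ p := hp.two_le
        have hQpos : 0 < Fintype.card (G ⧸ H) := Fintype.card_pos
        rw [← hcard, hcardQ]
        exact (Nat.lt_mul_iff_one_lt_right hQpos).mpr h2
      -- quotient map on monoid algebras
      set φ := MonoidAlgebra.mapDomainRingHom R (QuotientGroup.mk' H) with hφ
      have hφe : φ e * φ e = φ e := by rw [← map_mul, he]
      have hcoe : ∀ x : MonoidAlgebra R G,
          φ x = MonoidAlgebra.mapDomain (QuotientGroup.mk (s := H)) x := fun x => rfl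
      have hhyp : ∀ q : ℕ, q.Prime → q ∣ Fintype.card (G ⧸ H) → ¬ IsUnit (q : R) := by
        intro q hq hqd
        exact h q hq (hqd.trans ⟨p, hcardQ⟩)
      have hnil : ∀ x : MonoidAlgebra R G,
          MonoidAlgebra.mapDomain (QuotientGroup.mk (s := H)) x = 0 → x ^ p = 0 :=
        fun x hx => ker_nilpotent p ⟨hp⟩ z hzc hordz x hx
      have hpow_e : ∀ f : MonoidAlgebra R G, f * f = f → f ^ p = f := by
        intro f hf
        have : ∀ k : ℕ, f ^ (k + 1) = f := by
          intro k
          induction k with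
          | zero => rw [pow_one]
          | succ k ihk => rw [pow_succ, ihk, hf]
        have hp2 := hp.two_le
        have hp1 : p = (p - 1) + 1 := by omega
        rw [hp1]; exact this _
      rcases ih (Fintype.card (G ⧸ H)) hlt (G ⧸ H) inferInstance inferInstance rfl hhyp
        (φ e) hφe with h0 | h1
      · left
        rw [← hpow_e e he]
        exact hnil e (by rw [← hcoe, h0])
      · right
        have hsub : (1 - e) * (1 - e) = 1 - e := by
          rw [sub_mul, one_mul, mul_sub, mul_one, he, sub_self, sub_zero]
        have : (1 - e) = 0 := by
          rw [← hpow_e (1 - e) hsub]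
          apply hnil
          rw [← hcoe, map_sub, map_one, h1, sub_self]
        exact (sub_eq_zero.mp this).symm


end
end

/-! ### Coleman's theorem -/

theorem coleman {G : Type*} [Group G] [Fintype G] {R : Type*} [CommRing R] [IsDomain R]
    (h : ∀ q : ℕ, q.Prime → q ∣ Fintype.card G → ¬ IsUnit (q : R))
    (e : MonoidAlgebra R G) (he : e * e = e) : e = 0 ∨ e = 1 := by
  rcases CharP.char_is_prime_or_zero R (ringChar R) with hpr | h0
  · exact coleman_charP_aux (ringChar R) hpr _ G inferInstance inferInstance rfl h e he
  · haveI : CharP R 0 := h0 ▸ ringChar.charP R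
    haveI : CharZero R := CharP.charP_to_charZero R
    exact coleman_charZero h e he

/-- Let `Γ, X` be finite groups, `R` a commutative integral domain in
which no prime divisor of `|Γ|·|X|` is invertible, `m ∈ R`, and suppose `1 + m·|X|` is
neither zero nor a unit.  Let `c = (1,1) + m·Σ_{x∈X}(1,x) ∈ R[Γ×X]`.  Then the ring
`R[Γ×X]_c` (multiplication `a ·_c b = a*c*b`) has no nonzero idempotents. -/
theorem stmt17 {Γ X : Type*} [Group Γ] [Group X] [Fintype Γ] [Fintype X]
    {R : Type*} [CommRing R] [IsDomain R]
    (hprime : ∀ q : ℕ, q.Prime → q ∣ Fintype.card Γ * Fintype.card X →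
      ¬ IsUnit (q : R))
    (m : R)
    (hzero : (1 : R) + m * Fintype.card X ≠ 0)
    (hunit : ¬ IsUnit ((1 : R) + m * Fintype.card X))
    (c : MonoidAlgebra R (Γ × X))
    (hc : c = 1 + m • ∑ x : X, MonoidAlgebra.of R (Γ × X) (1, x)) :
    ∀ a : MonoidAlgebra R (Γ × X), a * c * a = a → a = 0 := by
  intro a ha
  have hcard : ∀ q : ℕ, q.Prime → q ∣ Fintype.card (Γ × X) → ¬ IsUnit (q : R) := by
    simpa [Fintype.card_prod] using hprime
  have he : (a * c) * (a * c) = a * c := by rw [← mul_assoc, ha]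
  rcases coleman hcard _ he with h0 | h1
  · calc a = a * c * a := ha.symm
    _ = 0 := by rw [h0, zero_mul]
  · have hf : (c * a) * (c * a) = c * a := by
      rw [mul_assoc, ← mul_assoc a, ha]
    rcases coleman hcard _ hf with f0 | f1
    · calc a = a * (c * a) := by rw [← mul_assoc, ha]
      _ = 0 := by rw [f0, mul_zero]
    · exfalso
      have hcu : IsUnit c := ⟨⟨c, a, f1, h1⟩, rfl⟩
      apply hunit
      have := hcu.map (MonoidAlgebra.lift R R (Γ × X) (1 : (Γ × X) →* R))
      convert this using 1
      rw [hc]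
      simp [MonoidAlgebra.lift_of, mul_comm]
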